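/- arXiv:2303.10496 — 5 statements merged into one kernel-verified Lean document; each statement's English description precedes it below -/
import Mathlib

section
/- Let K : ℤ³ → ℂ be absolutely summable and let f, g, h : ℤ → ℂ. Define the trilinear pseudoproduct T(f,g,h) : ℤ → ℂ by T(f,g,h)_m = ∑_{k₁,k₂,k₃ ∈ ℤ} f_{k₁ − m} · g_{k₂ + k₁ − m} · h_{k₃ + k₁ − m} · K_{k₁,k₂,k₃}. Then for all exponents 1 ≤ p₁, p₂, p₃, q ≤ ∞ with 1/p₁ + 1/p₂ + 1/p₃ = 1/q, if f ∈ ℓ^{p₁}(ℤ), g ∈ ℓ^{p₂}(ℤ), h ∈ ℓ^{p₃}(ℤ), then T(f,g,h) ∈ ℓ^q(ℤ) and ‖T(f,g,h)‖_{ℓ^q} ≤ ‖K‖_{ℓ¹(ℤ³)} · ‖f‖_{ℓ^{p₁}} · ‖g‖_{ℓ^{p₂}} · ‖h‖_{ℓ^{p₃}}. -/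
open MeasureTheory Filter
open scoped ENNReal

/-- The trilinear pseudoproduct with kernel `K`. -/
noncomputable def pseudoProd (K : ℤ × ℤ × ℤ → ℂ) (f g h : ℤ → ℂ) (m : ℤ) : ℂ :=
  ∑' k : ℤ × ℤ × ℤ, f (k.1 - m) * g (k.2.1 + k.1 - m) * h (k.2.2 + k.1 - m) * K k

noncomputable def pseudoTerm (K : ℤ × ℤ × ℤ → ℂ) (f g h : ℤ → ℂ) (k : ℤ × ℤ × ℤ) (m : ℤ) : ℂ :=
  f (k.1 - m) * g (k.2.1 + k.1 - m) * h (k.2.2 + k.1 - m) * K k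

lemma eLpNorm_comp_equiv (f : ℤ → ℂ) (e : ℤ ≃ ℤ) (p : ℝ≥0∞) :
    eLpNorm (fun m => f (e m)) p Measure.count = eLpNorm f p Measure.count := by
  rcases eq_or_ne p 0 with rfl | hp0
  · simp
  rcases eq_or_ne p ∞ with rfl | hptop
  · simp only [eLpNorm_exponent_top, eLpNormEssSup_count]
    exact e.iSup_congr (fun _ => rfl)
  · rw [eLpNorm_eq_eLpNorm' hp0 hptop, eLpNorm_eq_eLpNorm' hp0 hptop]
    unfold eLpNorm'
    rw [lintegral_count, lintegral_count]
    congr 1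
    exact e.tsum_eq fun a => (↑‖f a‖₊ : ℝ≥0∞) ^ p.toReal

lemma enorm_le_eLpNorm_count (f : ℤ → ℂ) (p : ℝ≥0∞) (hp0 : p ≠ 0) (a : ℤ) :
    (‖f a‖₊ : ℝ≥0∞) ≤ eLpNorm f p Measure.count := by
  rcases eq_or_ne p ∞ with rfl | hptop
  · simp only [eLpNorm_exponent_top, eLpNormEssSup_count]
    exact le_iSup (fun a => (‖f a‖₊ : ℝ≥0∞)) a
  · have hpr : 0 < p.toReal := ENNReal.toReal_pos hp0 hptop
    rw [eLpNorm_eq_eLpNorm' hp0 hptop]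
    unfold eLpNorm'
    rw [lintegral_count]
    have h1 : ((‖f a‖₊ : ℝ≥0∞) ^ p.toReal) ^ (1 / p.toReal) = (‖f a‖₊ : ℝ≥0∞) := by
      rw [one_div, ENNReal.rpow_rpow_inv hpr.ne']
    rw [← h1]
    exact ENNReal.rpow_le_rpow (ENNReal.le_tsum a) (by positivity)

lemma norm_le_toReal_eLpNorm_count (f : ℤ → ℂ) (p : ℝ≥0∞) (hp0 : p ≠ 0)
    (hf : eLpNorm f p Measure.count < ⊤) (a : ℤ) :
    ‖f a‖ ≤ (eLpNorm f p Measure.count).toReal := by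
  have h := enorm_le_eLpNorm_count f p hp0 a
  have := ENNReal.toReal_mono hf.ne h
  simpa using this

lemma msble_count (F : ℤ → ℂ) : AEStronglyMeasurable F (Measure.count : Measure ℤ) :=
  (measurable_of_countable F).aestronglyMeasurable

lemma holder3 (f₁ f₂ f₃ : ℤ → ℂ) (p₁ p₂ p₃ q : ℝ≥0∞)
    (hpq : 1 / p₁ + 1 / p₂ + 1 / p₃ = 1 / q) :
    eLpNorm (fun m => f₁ m * (f₂ m * f₃ m)) q Measure.count ≤
      eLpNorm f₁ p₁ Measure.count * eLpNorm f₂ p₂ Measure.count *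
        eLpNorm f₃ p₃ Measure.count := by
  set r : ℝ≥0∞ := (1 / p₂ + 1 / p₃)⁻¹ with hr
  have h1r : 1 / r = 1 / p₂ + 1 / p₃ := by rw [hr, one_div, inv_inv]
  have h23 : eLpNorm (fun m => f₂ m * f₃ m) r Measure.count ≤
      eLpNorm f₂ p₂ Measure.count * eLpNorm f₃ p₃ Measure.count := by
    have := eLpNorm_smul_le_mul_eLpNorm (μ := (Measure.count : Measure ℤ))
      (f := f₃) (φ := f₂) (p := p₂) (q := p₃) (r := r) (msble_count f₃) (msble_count f₂)
      (hpqr := ⟨by simpa only [one_div] using h1r.symm⟩)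
    exact this
  have hq1 : 1 / q = 1 / p₁ + 1 / r := by rw [h1r, ← hpq]; ring
  have h123 := eLpNorm_smul_le_mul_eLpNorm (μ := (Measure.count : Measure ℤ))
    (f := fun m => f₂ m * f₃ m) (φ := f₁) (p := p₁) (q := r) (r := q) (msble_count _) (msble_count f₁)
    (hpqr := ⟨by simpa only [one_div] using hq1.symm⟩)
  calc eLpNorm (fun m => f₁ m * (f₂ m * f₃ m)) q Measure.count
      ≤ eLpNorm f₁ p₁ Measure.count * eLpNorm (fun m => f₂ m * f₃ m) r Measure.count := by
        exact h123
    _ ≤ eLpNorm f₁ p₁ Measure.count *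
        (eLpNorm f₂ p₂ Measure.count * eLpNorm f₃ p₃ Measure.count) := mul_le_mul_right h23 _
    _ = _ := by ring

/-- Boundedness of pseudoproducts with absolutely summable kernel on Hölder
triples of `ℓ^p` spaces over `ℤ`. -/
theorem pseudoProd_bound (K : ℤ × ℤ × ℤ → ℂ) (hK : Summable fun k => ‖K k‖)
    (p₁ p₂ p₃ q : ℝ≥0∞) (hp₁ : 1 ≤ p₁) (hp₂ : 1 ≤ p₂) (hp₃ : 1 ≤ p₃) (hq : 1 ≤ q)
    (hpq : 1 / p₁ + 1 / p₂ + 1 / p₃ = 1 / q)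
    (f g h : ℤ → ℂ)
    (hf : eLpNorm f p₁ Measure.count < ⊤)
    (hg : eLpNorm g p₂ Measure.count < ⊤)
    (hh : eLpNorm h p₃ Measure.count < ⊤) :
    eLpNorm (pseudoProd K f g h) q Measure.count < ⊤ ∧
      eLpNorm (pseudoProd K f g h) q Measure.count ≤
        eLpNorm K 1 Measure.count * eLpNorm f p₁ Measure.count *
          eLpNorm g p₂ Measure.count * eLpNorm h p₃ Measure.count := by
  have hp₁0 : p₁ ≠ 0 := fun h0 => by simp [h0] at hp₁
  have hp₂0 : p₂ ≠ 0 := fun h0 => by simp [h0] at hp₂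
  have hp₃0 : p₃ ≠ 0 := fun h0 => by simp [h0] at hp₃
  set A := eLpNorm f p₁ Measure.count with hA
  set B := eLpNorm g p₂ Measure.count with hB
  set C := eLpNorm h p₃ Measure.count with hC
  set NK := eLpNorm K 1 (Measure.count : Measure (ℤ × ℤ × ℤ)) with hNKdef
  have hNK : NK = ∑' k, (‖K k‖₊ : ℝ≥0∞) := by
    rw [hNKdef, eLpNorm_one_eq_lintegral_enorm, lintegral_count]; rfl
  have hKnn : Summable fun k => ‖K k‖₊ :=
    NNReal.summable_coe.mp (by simpa using hK)
  have hNKtop : NK ≠ ⊤ := by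
    rw [hNK]; exact ENNReal.tsum_coe_ne_top_iff_summable.mpr hKnn
  -- per-term bound
  have hFk : ∀ k, eLpNorm (pseudoTerm K f g h k) q Measure.count ≤
      (‖K k‖₊ : ℝ≥0∞) * (A * B * C) := by
    intro k
    have hrw : pseudoTerm K f g h k = K k • (fun m =>
        f (k.1 - m) * (g (k.2.1 + k.1 - m) * h (k.2.2 + k.1 - m))) := by
      funext m
      simp only [pseudoTerm, Pi.smul_apply, smul_eq_mul]
      ring
    rw [hrw, eLpNorm_const_smul]
    refine mul_le_mul_right ?_ _
    have hstep := holder3 (fun m => f (k.1 - m)) (fun m => g (k.2.1 + k.1 - m))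
      (fun m => h (k.2.2 + k.1 - m)) p₁ p₂ p₃ q hpq
    refine hstep.trans (le_of_eq ?_)
    have heq : eLpNorm (fun m => f (k.1 - m)) p₁ Measure.count *
        eLpNorm (fun m => g (k.2.1 + k.1 - m)) p₂ Measure.count *
        eLpNorm (fun m => h (k.2.2 + k.1 - m)) p₃ Measure.count = A * B * C := by
          rw [hA, hB, hC,
            ← eLpNorm_comp_equiv f (Equiv.subLeft k.1) p₁,
            ← eLpNorm_comp_equiv g (Equiv.subLeft (k.2.1 + k.1)) p₂,
            ← eLpNorm_comp_equiv h (Equiv.subLeft (k.2.2 + k.1)) p₃]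
          rfl
    exact heq
  -- pointwise summability
  have hsum : ∀ m : ℤ, Summable fun k => ‖pseudoTerm K f g h k m‖ := by
    intro m
    refine Summable.of_nonneg_of_le (fun k => norm_nonneg _) ?_
      (hK.mul_left (A.toReal * B.toReal * C.toReal))
    intro k
    have h1 := norm_le_toReal_eLpNorm_count f p₁ hp₁0 hf (k.1 - m)
    have h2 := norm_le_toReal_eLpNorm_count g p₂ hp₂0 hg (k.2.1 + k.1 - m)
    have h3 := norm_le_toReal_eLpNorm_count h p₃ hp₃0 hh (k.2.2 + k.1 - m)
    calc ‖pseudoTerm K f g h k m‖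
        = ‖f (k.1 - m)‖ * ‖g (k.2.1 + k.1 - m)‖ * ‖h (k.2.2 + k.1 - m)‖ * ‖K k‖ := by
          simp [pseudoTerm, norm_mul]
      _ ≤ A.toReal * B.toReal * C.toReal * ‖K k‖ := by
          gcongr
  have hHasSum : ∀ m : ℤ, HasSum (fun k => pseudoTerm K f g h k m)
      (pseudoProd K f g h m) := fun m => (Summable.of_norm (hsum m)).hasSum
  -- partial sums
  obtain ⟨e⟩ : Nonempty (ℕ ≃ ℤ × ℤ × ℤ) := ⟨(Denumerable.eqv (ℤ × ℤ × ℤ)).symm⟩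
  have h_lim : ∀ m : ℤ, Tendsto
      (fun n => (∑ i ∈ Finset.range n, pseudoTerm K f g h (e i)) m) atTop
      (nhds (pseudoProd K f g h m)) := by
    intro m
    have h1 : HasSum (fun n => pseudoTerm K f g h (e n) m) (pseudoProd K f g h m) :=
      (Equiv.hasSum_iff e (f := fun k => pseudoTerm K f g h k m)).mpr (hHasSum m)
    have := h1.tendsto_sum_nat
    simpa [Finset.sum_apply] using this
  have key : eLpNorm (pseudoProd K f g h) q Measure.count ≤ NK * (A * B * C) := by
    have h0 := Lp.eLpNorm_lim_le_liminf_eLpNorm (μ := (Measure.count : Measure ℤ)) (p := q)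
      (f := fun n => ∑ i ∈ Finset.range n, pseudoTerm K f g h (e i))
      (fun n => msble_count _) (pseudoProd K f g h) (Eventually.of_forall h_lim)
    refine h0.trans ?_
    have h2 : ∀ n, eLpNorm (∑ i ∈ Finset.range n, pseudoTerm K f g h (e i))
        q Measure.count ≤ NK * (A * B * C) := by
      intro n
      calc eLpNorm (∑ i ∈ Finset.range n, pseudoTerm K f g h (e i)) q Measure.count
          ≤ ∑ i ∈ Finset.range n, eLpNorm (pseudoTerm K f g h (e i)) q Measure.count :=
            eLpNorm_sum_le (fun i _ => msble_count _) hq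
        _ ≤ ∑' i : ℕ, eLpNorm (pseudoTerm K f g h (e i)) q Measure.count :=
            ENNReal.sum_le_tsum _
        _ = ∑' k, eLpNorm (pseudoTerm K f g h k) q Measure.count :=
            e.tsum_eq fun k => eLpNorm (pseudoTerm K f g h k) q Measure.count
        _ ≤ ∑' k, (‖K k‖₊ : ℝ≥0∞) * (A * B * C) := ENNReal.tsum_le_tsum hFk
        _ = (∑' k, (‖K k‖₊ : ℝ≥0∞)) * (A * B * C) := ENNReal.tsum_mul_right
        _ = NK * (A * B * C) := by rw [hNK]
    refine (liminf_le_liminf (Eventually.of_forall h2)).trans ?_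
    simp
  constructor
  · refine key.trans_lt ?_
    exact ENNReal.mul_lt_top hNKtop.lt_top
      (ENNReal.mul_lt_top (ENNReal.mul_lt_top hf hg) hh)
  · refine key.trans (le_of_eq ?_)
    ring
end

section
/- Fix an integer N ≥ 1. There is a constant C depending only on N with the following property. Let A > 0, α ∈ (0,1], and let K : ℤ → ℂ satisfy |K_m| ≤ A·α·(1+α|m|)^{−N−2} for all m ∈ ℤ. Let R ≥ 0 and let f, g : ℤ → ℂ be sequences such that |m − m'| ≥ R for every m in the support of f and every m' in the support of g. Then for all exponents 1 ≤ p₁, p₂, p ≤ ∞ with 1/p₁ + 1/p₂ = 1/p, the pointwise product of f with the convolution K∗g (where (K∗g)_n = ∑_{m∈ℤ} K_{n−m} g_m) satisfies ‖f·(K∗g)‖_{ℓ^p} ≤ C · A · (1 + αR)^{−N} · ‖f‖_{ℓ^{p₁}} ‖g‖_{ℓ^{p₂}}. -/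
open MeasureTheory
open scoped ENNReal

private lemma coe_nnnorm_tsum_le (v : ℤ → ℂ) :
    (‖∑' m, v m‖₊ : ℝ≥0∞) ≤ ∑' m, (‖v m‖₊ : ℝ≥0∞) := by
  by_cases h : (∑' m, (‖v m‖₊ : ℝ≥0∞)) = ⊤
  · simp [h]
  · have hs : Summable fun m => ‖v m‖₊ := ENNReal.tsum_coe_ne_top_iff_summable.mp h
    rw [← ENNReal.coe_tsum hs]
    exact_mod_cast nnnorm_tsum_le hs

set_option maxHeartbeats 1000000 in
private lemma tsum_ofReal_kernel_le {α : ℝ} (h0 : 0 < α) (h1 : α ≤ 1) :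
    (∑' k : ℤ, ENNReal.ofReal (α / (1 + α * |(k : ℝ)|) ^ 2)) ≤ 3 := by
  have tail : (∑' n : ℕ, ENNReal.ofReal (α / (1 + α * ((n : ℝ) + 1)) ^ 2)) ≤ 1 := by
    have hle : ∀ n : ℕ, ENNReal.ofReal (α / (1 + α * ((n : ℝ) + 1)) ^ 2) ≤
        ENNReal.ofReal (1 / (1 + α * (n : ℝ)) - 1 / (1 + α * ((n : ℝ) + 1))) := by
      intro n
      apply ENNReal.ofReal_le_ofReal
      have hn : (0:ℝ) ≤ (n : ℝ) := n.cast_nonneg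
      have h1n : (0:ℝ) < 1 + α * n := by nlinarith
      have h2n : (0:ℝ) < 1 + α * ((n : ℝ) + 1) := by nlinarith
      rw [div_sub_div _ _ h1n.ne' h2n.ne']
      have hnum : 1 * (1 + α * ((n : ℝ) + 1)) - (1 + α * (n : ℝ)) * 1 = α := by ring
      rw [hnum, div_le_div_iff₀ (by positivity) (by positivity)]
      nlinarith [mul_pos (mul_pos h0 h2n) h0]
    calc (∑' n : ℕ, ENNReal.ofReal (α / (1 + α * ((n : ℝ) + 1)) ^ 2))
        ≤ ∑' n : ℕ, ENNReal.ofReal (1 / (1 + α * (n : ℝ)) - 1 / (1 + α * ((n : ℝ) + 1))) :=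
          ENNReal.tsum_le_tsum hle
      _ ≤ 1 := by
          rw [ENNReal.tsum_eq_iSup_sum]
          refine iSup_le fun s => ?_
          obtain ⟨M, hM⟩ := s.exists_nat_subset_range
          have hnn : ∀ n : ℕ, (0:ℝ) ≤ 1 / (1 + α * (n : ℝ)) - 1 / (1 + α * ((n : ℝ) + 1)) := by
            intro n
            have hn : (0:ℝ) ≤ (n : ℝ) := n.cast_nonneg
            have h1n : (0:ℝ) < 1 + α * n := by nlinarith
            have h2n : (0:ℝ) < 1 + α * ((n : ℝ) + 1) := by nlinarith
            have := one_div_le_one_div_of_le h1n (by nlinarith : (1:ℝ) + α * n ≤ 1 + α * ((n:ℝ)+1))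
            linarith
          calc (∑ i ∈ s, ENNReal.ofReal (1 / (1 + α * (i : ℝ)) - 1 / (1 + α * ((i : ℝ) + 1))))
              ≤ ∑ i ∈ Finset.range M,
                  ENNReal.ofReal (1 / (1 + α * (i : ℝ)) - 1 / (1 + α * ((i : ℝ) + 1))) :=
                Finset.sum_le_sum_of_subset hM
            _ = ENNReal.ofReal (∑ i ∈ Finset.range M,
                  (1 / (1 + α * (i : ℝ)) - 1 / (1 + α * ((i : ℝ) + 1)))) :=
                (ENNReal.ofReal_sum_of_nonneg fun i _ => hnn i).symm
            _ ≤ 1 := by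
                have htel : (∑ i ∈ Finset.range M,
                    ((fun j : ℕ => 1 / (1 + α * (j : ℝ))) i
                      - (fun j : ℕ => 1 / (1 + α * (j : ℝ))) (i + 1)))
                    = 1 / (1 + α * ((0:ℕ) : ℝ)) - 1 / (1 + α * ((M:ℕ) : ℝ)) :=
                  Finset.sum_range_sub' (fun j : ℕ => 1 / (1 + α * (j : ℝ))) M
                have hM0 : (0:ℝ) < 1 + α * ((M:ℕ) : ℝ) := by positivity
                have : (∑ i ∈ Finset.range M,
                    (1 / (1 + α * (i : ℝ)) - 1 / (1 + α * ((i : ℝ) + 1)))) ≤ 1 := by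
                  rw [show (∑ i ∈ Finset.range M,
                      (1 / (1 + α * (i : ℝ)) - 1 / (1 + α * ((i : ℝ) + 1))))
                      = ∑ i ∈ Finset.range M,
                        ((fun j : ℕ => 1 / (1 + α * (j : ℝ))) i
                          - (fun j : ℕ => 1 / (1 + α * (j : ℝ))) (i + 1)) by
                    refine Finset.sum_congr rfl fun i _ => ?_
                    push_cast
                    ring_nf]
                  rw [htel]
                  have : (0:ℝ) ≤ 1 / (1 + α * ((M:ℕ) : ℝ)) := by positivity
                  simp only [Nat.cast_zero, mul_zero, add_zero, div_one]
                  linarith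
                calc ENNReal.ofReal (∑ i ∈ Finset.range M,
                      (1 / (1 + α * (i : ℝ)) - 1 / (1 + α * ((i : ℝ) + 1))))
                    ≤ ENNReal.ofReal 1 := ENNReal.ofReal_le_ofReal this
                  _ = 1 := ENNReal.ofReal_one
  have natpart : (∑' n : ℕ, ENNReal.ofReal (α / (1 + α * |((n : ℤ) : ℝ)|) ^ 2)) ≤ 2 := by
    have hcongr : ∀ n : ℕ, ENNReal.ofReal (α / (1 + α * |((n : ℤ) : ℝ)|) ^ 2)
        = ENNReal.ofReal (α / (1 + α * (n : ℝ)) ^ 2) := by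
      intro n
      congr 2
      rw [Int.cast_natCast, abs_of_nonneg n.cast_nonneg]
    rw [tsum_congr hcongr, tsum_eq_zero_add' ENNReal.summable]
    have h0term : ENNReal.ofReal (α / (1 + α * ((0:ℕ) : ℝ)) ^ 2) ≤ 1 := by
      simp only [Nat.cast_zero, mul_zero, add_zero, one_pow, div_one]
      calc ENNReal.ofReal α ≤ ENNReal.ofReal 1 := ENNReal.ofReal_le_ofReal h1
        _ = 1 := ENNReal.ofReal_one
    have htail : (∑' n : ℕ, ENNReal.ofReal (α / (1 + α * ((n + 1 : ℕ) : ℝ)) ^ 2)) ≤ 1 := by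
      refine le_trans (le_of_eq (tsum_congr fun n => ?_)) tail
      push_cast
      ring_nf
    calc ENNReal.ofReal (α / (1 + α * ((0:ℕ) : ℝ)) ^ 2)
          + ∑' n : ℕ, ENNReal.ofReal (α / (1 + α * ((n + 1 : ℕ) : ℝ)) ^ 2)
        ≤ 1 + 1 := add_le_add h0term htail
      _ = 2 := by norm_num
  have negpart : (∑' n : ℕ, ENNReal.ofReal (α / (1 + α * |((-(n+1) : ℤ) : ℝ)|) ^ 2)) ≤ 1 := by
    refine le_trans (le_of_eq (tsum_congr fun n => ?_)) tail
    congr 2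
    push_cast
    rw [abs_neg, abs_of_nonneg (by positivity)]
  rw [tsum_of_nat_of_neg_add_one ENNReal.summable ENNReal.summable]
  calc (∑' n : ℕ, ENNReal.ofReal (α / (1 + α * |((n : ℤ) : ℝ)|) ^ 2))
        + ∑' n : ℕ, ENNReal.ofReal (α / (1 + α * |((-(n+1) : ℤ) : ℝ)|) ^ 2)
      ≤ 2 + 1 := add_le_add natpart negpart
    _ = 3 := by norm_num

private lemma young_count {t : ℝ} (ht : 1 ≤ t) (h G : ℤ → ℝ≥0∞) :
    (∑' n : ℤ, (∑' m : ℤ, h (n - m) * G m) ^ t) ^ (1/t) ≤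
      (∑' k, h k) * (∑' n : ℤ, G n ^ t) ^ (1/t) := by
  have ht0 : (0:ℝ) < t := lt_of_lt_of_le one_pos ht
  set S := ∑' k, h k with hS
  have hSn : ∀ n : ℤ, (∑' m : ℤ, h (n - m)) = S := by
    intro n
    simpa using (Equiv.subLeft n).tsum_eq h
  have hSm : ∀ m : ℤ, (∑' n : ℤ, h (n - m)) = S := by
    intro m
    simpa using (Equiv.subRight m).tsum_eq h
  have key : ∀ n : ℤ, (∑' m : ℤ, h (n - m) * G m) ^ t
      ≤ S ^ (t - 1) * ∑' m : ℤ, h (n - m) * G m ^ t := by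
    intro n
    rcases eq_or_lt_of_le ht with ht1 | ht1
    · simp [← ht1, ENNReal.rpow_one]
    · have hconj : (Real.conjExponent t).HolderConjugate t :=
        (Real.HolderConjugate.conjExponent ht1).symm
      set t' := Real.conjExponent t with ht'
      have ht'0 : (0:ℝ) < t' := hconj.pos
      have hmeas : ∀ v : ℤ → ℝ≥0∞, AEMeasurable v (Measure.count : Measure ℤ) :=
        fun v => (measurable_of_countable v).aemeasurable
      have holder := ENNReal.lintegral_mul_le_Lp_mul_Lq (Measure.count : Measure ℤ) hconj
        (f := fun m => h (n - m) ^ (1/t')) (g := fun m => h (n - m) ^ (1/t) * G m)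
        (hmeas _) (hmeas _)
      simp only [Pi.mul_apply, lintegral_count] at holder
      have hLHS : (∑' m : ℤ, h (n - m) ^ (1/t') * (h (n - m) ^ (1/t) * G m))
          = ∑' m : ℤ, h (n - m) * G m := by
        refine tsum_congr fun m => ?_
        rw [← mul_assoc, ← ENNReal.rpow_add_of_nonneg _ _ (by positivity) (by positivity),
          show 1/t' + 1/t = 1 by rw [one_div, one_div]; exact hconj.inv_add_inv_eq_one,
          ENNReal.rpow_one]
      have hf1 : (∑' m : ℤ, (h (n - m) ^ (1/t')) ^ t') = S := by
        rw [← hSn n]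
        refine tsum_congr fun m => ?_
        rw [← ENNReal.rpow_mul, one_div_mul_cancel ht'0.ne', ENNReal.rpow_one]
      have hg1 : (∑' m : ℤ, (h (n - m) ^ (1/t) * G m) ^ t)
          = ∑' m : ℤ, h (n - m) * G m ^ t := by
        refine tsum_congr fun m => ?_
        rw [ENNReal.mul_rpow_of_nonneg _ _ ht0.le, ← ENNReal.rpow_mul,
          one_div_mul_cancel ht0.ne', ENNReal.rpow_one]
      rw [hLHS, hf1, hg1] at holder
      calc (∑' m : ℤ, h (n - m) * G m) ^ t
          ≤ (S ^ (1/t') * (∑' m : ℤ, h (n - m) * G m ^ t) ^ (1/t)) ^ t :=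
            ENNReal.rpow_le_rpow holder ht0.le
        _ = S ^ (t - 1) * ∑' m : ℤ, h (n - m) * G m ^ t := by
            rw [ENNReal.mul_rpow_of_nonneg _ _ ht0.le, ← ENNReal.rpow_mul,
              ← ENNReal.rpow_mul]
            congr 1
            · congr 1
              rw [ht', Real.conjExponent]
              field_simp
            · rw [one_div_mul_cancel ht0.ne', ENNReal.rpow_one]
  calc (∑' n : ℤ, (∑' m : ℤ, h (n - m) * G m) ^ t) ^ (1/t)
      ≤ (∑' n : ℤ, S ^ (t - 1) * ∑' m : ℤ, h (n - m) * G m ^ t) ^ (1/t) :=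
        ENNReal.rpow_le_rpow (ENNReal.tsum_le_tsum key) (by positivity)
    _ = (S ^ (t - 1) * (S * ∑' m : ℤ, G m ^ t)) ^ (1/t) := by
        rw [ENNReal.tsum_mul_left]
        congr 2
        rw [ENNReal.tsum_comm]
        rw [← ENNReal.tsum_mul_left]
        refine tsum_congr fun m => ?_
        rw [ENNReal.tsum_mul_right, hSm m, mul_comm]
    _ = (S ^ t * ∑' m : ℤ, G m ^ t) ^ (1/t) := by
        have hS1 : S ^ (t - 1) * S = S ^ t := by
          nth_rewrite 2 [← ENNReal.rpow_one S]
          rw [← ENNReal.rpow_add_of_nonneg _ _ (by linarith) zero_le_one]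
          norm_num
        rw [← mul_assoc, hS1]
    _ = S * (∑' m : ℤ, G m ^ t) ^ (1/t) := by
        rw [ENNReal.mul_rpow_of_nonneg _ _ (by positivity), ← ENNReal.rpow_mul,
          mul_one_div_cancel ht0.ne', ENNReal.rpow_one]

private lemma conv_bound_count {q : ℝ≥0∞} (hq : 1 ≤ q) (h : ℤ → ℝ≥0∞) (u g : ℤ → ℂ)
    (hpt : ∀ n : ℤ, (‖u n‖₊ : ℝ≥0∞) ≤ ∑' m : ℤ, h (n - m) * (‖g m‖₊ : ℝ≥0∞)) :
    eLpNorm u q Measure.count ≤ (∑' k, h k) * eLpNorm g q Measure.count := by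
  have hq0 : q ≠ 0 := by
    intro hq0
    rw [hq0] at hq
    simp at hq
  by_cases hqt : q = ∞
  · subst hqt
    rw [eLpNorm_exponent_top, eLpNorm_exponent_top, eLpNormEssSup_count, eLpNormEssSup_count]
    refine iSup_le fun n => ?_
    calc (‖u n‖₊ : ℝ≥0∞) ≤ ∑' m : ℤ, h (n - m) * (‖g m‖₊ : ℝ≥0∞) := hpt n
      _ ≤ ∑' m : ℤ, h (n - m) * ⨆ a : ℤ, (‖g a‖₊ : ℝ≥0∞) :=
          ENNReal.tsum_le_tsum fun m => mul_le_mul_right (le_iSup (fun a : ℤ => (‖g a‖₊ : ℝ≥0∞)) m) (h (n - m))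
      _ = (∑' m : ℤ, h (n - m)) * ⨆ a : ℤ, (‖g a‖₊ : ℝ≥0∞) := ENNReal.tsum_mul_right
      _ = (∑' k, h k) * ⨆ a : ℤ, (‖g a‖₊ : ℝ≥0∞) := by
          congr 1
          simpa using (Equiv.subLeft n).tsum_eq h
  · have ht : 1 ≤ q.toReal := by
      have := ENNReal.toReal_mono hqt hq
      simpa using this
    have ht0 : (0:ℝ) < q.toReal := lt_of_lt_of_le one_pos ht
    rw [eLpNorm_eq_lintegral_rpow_enorm_toReal hq0 hqt, eLpNorm_eq_lintegral_rpow_enorm_toReal hq0 hqt,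
      lintegral_count, lintegral_count]
    calc (∑' n : ℤ, (‖u n‖₊ : ℝ≥0∞) ^ q.toReal) ^ (1 / q.toReal)
        ≤ (∑' n : ℤ, (∑' m : ℤ, h (n - m) * (‖g m‖₊ : ℝ≥0∞)) ^ q.toReal) ^ (1 / q.toReal) := by
          refine ENNReal.rpow_le_rpow (ENNReal.tsum_le_tsum fun n => ?_) (by positivity)
          exact ENNReal.rpow_le_rpow (hpt n) ht0.le
      _ ≤ (∑' k, h k) * (∑' n : ℤ, (‖g n‖₊ : ℝ≥0∞) ^ q.toReal) ^ (1 / q.toReal) :=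
          young_count ht h _

/-- Pseudolocality of frequency-localized convolution operators on `ℤ`:
if the kernel `K` decays at scale `α⁻¹` and the supports of `f` and `g` are
separated by `R`, the product `f · (K ∗ g)` gains a factor `(1 + αR)^(-N)`. -/
theorem conv_pseudolocal (N : ℕ) (hN : 1 ≤ N) :
    ∃ C : ℝ, 0 < C ∧
      ∀ (A α : ℝ), 0 < A → α ∈ Set.Ioc (0 : ℝ) 1 →
      ∀ K : ℤ → ℂ,
        (∀ m : ℤ, ‖K m‖ ≤ A * α / (1 + α * |(m : ℝ)|) ^ (N + 2)) →
      ∀ R : ℝ, 0 ≤ R →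
      ∀ f g : ℤ → ℂ,
        (∀ m ∈ Function.support f, ∀ m' ∈ Function.support g, R ≤ |((m - m' : ℤ) : ℝ)|) →
      ∀ p₁ p₂ p : ℝ≥0∞, 1 ≤ p₁ → 1 ≤ p₂ → 1 ≤ p →
        1 / p₁ + 1 / p₂ = 1 / p →
        eLpNorm (fun n : ℤ => f n * ∑' m : ℤ, K (n - m) * g m) p Measure.count ≤
          ENNReal.ofReal (C * A / (1 + α * R) ^ N) *
            (eLpNorm f p₁ Measure.count * eLpNorm g p₂ Measure.count) := by
  refine ⟨3, by norm_num, ?_⟩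
  intro A α hA hα K hK R hR f g hsep p₁ p₂ p hp₁ hp₂ hp hpq
  obtain ⟨hα1, hα2⟩ := hα
  have hB : (0:ℝ) < 1 + α * R := by nlinarith
  have hcnn : (0:ℝ) ≤ A / (1 + α * R) ^ N := by positivity
  -- the improved kernel
  set h' : ℤ → ℝ≥0∞ :=
    fun k => ENNReal.ofReal (A / (1 + α * R) ^ N * (α / (1 + α * |(k : ℝ)|) ^ 2)) with hh'
  have hS_le : (∑' k, h' k) ≤ ENNReal.ofReal (3 * A / (1 + α * R) ^ N) := by
    have hsplit : ∀ k : ℤ, h' k = ENNReal.ofReal (A / (1 + α * R) ^ N) *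
        ENNReal.ofReal (α / (1 + α * |(k : ℝ)|) ^ 2) :=
      fun k => ENNReal.ofReal_mul hcnn
    rw [tsum_congr hsplit, ENNReal.tsum_mul_left]
    calc ENNReal.ofReal (A / (1 + α * R) ^ N)
          * ∑' k : ℤ, ENNReal.ofReal (α / (1 + α * |(k : ℝ)|) ^ 2)
        ≤ ENNReal.ofReal (A / (1 + α * R) ^ N) * 3 :=
          mul_le_mul_right (tsum_ofReal_kernel_le hα1 hα2) _
      _ = ENNReal.ofReal (3 * A / (1 + α * R) ^ N) := by
          rw [show (3:ℝ≥0∞) = ENNReal.ofReal 3 by norm_num, ← ENNReal.ofReal_mul hcnn]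
          congr 1
          ring
  -- the truncated convolution
  set u : ℤ → ℂ := fun n => if f n = 0 then 0 else ∑' m : ℤ, K (n - m) * g m with hu
  have hfu : (fun n : ℤ => f n * ∑' m : ℤ, K (n - m) * g m) = fun n => f n * u n := by
    funext n
    by_cases hfn : f n = 0 <;> simp [u, hfn]
  -- pointwise bound
  have hpt : ∀ n : ℤ, (‖u n‖₊ : ℝ≥0∞) ≤ ∑' m : ℤ, h' (n - m) * (‖g m‖₊ : ℝ≥0∞) := by
    intro n
    by_cases hfn : f n = 0
    · simp [u, hfn]
    · have hn : n ∈ Function.support f := hfn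
      have hun : u n = ∑' m : ℤ, K (n - m) * g m := if_neg hfn
      calc (‖u n‖₊ : ℝ≥0∞) ≤ ∑' m : ℤ, (‖K (n - m) * g m‖₊ : ℝ≥0∞) := by
            rw [hun]; exact coe_nnnorm_tsum_le _
        _ ≤ ∑' m : ℤ, h' (n - m) * (‖g m‖₊ : ℝ≥0∞) := by
            refine ENNReal.tsum_le_tsum fun m => ?_
            by_cases hgm : g m = 0
            · simp [hgm]
            · have hm : m ∈ Function.support g := hgm
              have hRnm : R ≤ |((n - m : ℤ) : ℝ)| := hsep n hn m hm
              rw [nnnorm_mul, ENNReal.coe_mul]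
              refine mul_le_mul_left ?_ _
              rw [← enorm_eq_nnnorm, ← ofReal_norm_eq_enorm]
              apply ENNReal.ofReal_le_ofReal
              set x : ℝ := |((n - m : ℤ) : ℝ)| with hx
              have hx0 : (0:ℝ) ≤ x := abs_nonneg _
              have hxR : R ≤ x := hRnm
              have hD : (0:ℝ) < 1 + α * x := by nlinarith
              calc ‖K (n - m)‖ ≤ A * α / (1 + α * x) ^ (N + 2) := hK _
                _ ≤ A / (1 + α * R) ^ N * (α / (1 + α * x) ^ 2) := by
                    rw [div_mul_div_comm, div_le_div_iff₀ (by positivity) (by positivity)]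
                    rw [pow_add]
                    have h2 : (1 + α * R) ^ N ≤ (1 + α * x) ^ N :=
                      pow_le_pow_left₀ hB.le (by nlinarith) N
                    have hAα : (0:ℝ) ≤ A * α := mul_nonneg hA.le hα1.le
                    have h3 : (1 + α * R) ^ N * (1 + α * x) ^ 2
                        ≤ (1 + α * x) ^ N * (1 + α * x) ^ 2 :=
                      mul_le_mul_of_nonneg_right h2 (by positivity)
                    nlinarith [mul_le_mul_of_nonneg_left h3 hAα]
  -- measurability
  have hmf : AEStronglyMeasurable f (Measure.count : Measure ℤ) :=
    (measurable_of_countable f).aestronglyMeasurable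
  have hmu : AEStronglyMeasurable u (Measure.count : Measure ℤ) :=
    (measurable_of_countable u).aestronglyMeasurable
  have holder : eLpNorm (fun n : ℤ => f n * u n) p Measure.count
      ≤ eLpNorm f p₁ Measure.count * eLpNorm u p₂ Measure.count := by
    have := eLpNorm_smul_le_mul_eLpNorm (f := u) (φ := f)
      (μ := (Measure.count : Measure ℤ)) hmu hmf (hpqr := ⟨by simpa only [one_div] using hpq⟩)
    simpa [Pi.smul_apply, smul_eq_mul, Pi.mul_def] using this
  have hstep3 : eLpNorm u p₂ Measure.count ≤ (∑' k, h' k) * eLpNorm g p₂ Measure.count :=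
    conv_bound_count hp₂ h' u g hpt
  rw [hfu]
  calc eLpNorm (fun n : ℤ => f n * u n) p Measure.count
      ≤ eLpNorm f p₁ Measure.count * eLpNorm u p₂ Measure.count := holder
    _ ≤ eLpNorm f p₁ Measure.count * ((∑' k, h' k) * eLpNorm g p₂ Measure.count) :=
        mul_le_mul_right hstep3 _
    _ = (∑' k, h' k) * (eLpNorm f p₁ Measure.count * eLpNorm g p₂ Measure.count) := by
        ring
    _ ≤ ENNReal.ofReal (3 * A / (1 + α * R) ^ N)
          * (eLpNorm f p₁ Measure.count * eLpNorm g p₂ Measure.count) :=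
        mul_le_mul_left hS_le _
end

section
/- Define φ : ℝ³ → ℝ by φ(ξ,η,σ) = −2cos ξ + 2cos η + 2cos(ξ − η − σ) − 2cos σ. Fix ξ ∈ ℝ and set P₁ = (ξ, −ξ), P₂ = (π + ξ/3, ξ/3), P₃ = ((ξ−π)/3, (ξ+2π)/3), P₄ = ((ξ+π)/3, (ξ−2π)/3). Then at each point (η,σ) = P_j (j = 1,2,3,4) the partial derivatives ∂φ/∂η and ∂φ/∂σ both vanish, and the values of φ there are: φ(ξ, P₁) = 0, φ(ξ, P₂) = −8cos³(ξ/3), φ(ξ, P₃) = 8cos³((π−ξ)/3), φ(ξ, P₄) = 8cos³((ξ+π)/3). -/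
/-- The Ablowitz–Ladik resonance phase function. -/
noncomputable def phiAL (ξ η σ : ℝ) : ℝ :=
  -2 * Real.cos ξ + 2 * Real.cos η + 2 * Real.cos (ξ - η - σ) - 2 * Real.cos σ

lemma phiAL_hasDerivAt_eta (ξ σ y : ℝ) :
    HasDerivAt (fun y => phiAL ξ y σ) (-2 * Real.sin y + 2 * Real.sin (ξ - y - σ)) y := by
  unfold phiAL
  have h2 : HasDerivAt (fun y : ℝ => ξ - y - σ) (-1) y := by
    simpa using ((hasDerivAt_id y).const_sub ξ).sub_const σ
  have h3 := (Real.hasDerivAt_cos (ξ - y - σ)).comp y h2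
  have := (((hasDerivAt_const y (-2 * Real.cos ξ)).add
      ((Real.hasDerivAt_cos y).const_mul 2)).add (h3.const_mul 2)).sub_const (2 * Real.cos σ)
  exact this.congr_deriv (by ring)

lemma phiAL_hasDerivAt_sigma (ξ η s : ℝ) :
    HasDerivAt (fun s => phiAL ξ η s) (2 * Real.sin (ξ - η - s) + 2 * Real.sin s) s := by
  unfold phiAL
  have h2 : HasDerivAt (fun s : ℝ => ξ - η - s) (-1) s := by
    simpa using (hasDerivAt_id s).const_sub (ξ - η)
  have h3 := (Real.hasDerivAt_cos (ξ - η - s)).comp s h2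
  have := (((hasDerivAt_const s (-2 * Real.cos ξ)).add
      (hasDerivAt_const s (2 * Real.cos η))).add (h3.const_mul 2)).sub
      ((Real.hasDerivAt_cos s).const_mul 2)
  exact this.congr_deriv (by ring)

/-- For fixed `ξ`, the points `P₁ = (ξ, −ξ)`, `P₂ = (π + ξ/3, ξ/3)`,
`P₃ = ((ξ−π)/3, (ξ+2π)/3)`, `P₄ = ((ξ+π)/3, (ξ−2π)/3)` are stationary points of
`φ(ξ,·,·)`, and `φ` takes the values `0`, `−8cos³(ξ/3)`, `8cos³((π−ξ)/3)`,
`8cos³((ξ+π)/3)` there. -/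
theorem phiAL_stationary_points (ξ : ℝ) :
    (HasDerivAt (fun y => phiAL ξ y (-ξ)) 0 ξ ∧
      HasDerivAt (fun s => phiAL ξ ξ s) 0 (-ξ) ∧
      phiAL ξ ξ (-ξ) = 0) ∧
    (HasDerivAt (fun y => phiAL ξ y (ξ / 3)) 0 (Real.pi + ξ / 3) ∧
      HasDerivAt (fun s => phiAL ξ (Real.pi + ξ / 3) s) 0 (ξ / 3) ∧
      phiAL ξ (Real.pi + ξ / 3) (ξ / 3) = -8 * Real.cos (ξ / 3) ^ 3) ∧
    (HasDerivAt (fun y => phiAL ξ y ((ξ + 2 * Real.pi) / 3)) 0 ((ξ - Real.pi) / 3) ∧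
      HasDerivAt (fun s => phiAL ξ ((ξ - Real.pi) / 3) s) 0 ((ξ + 2 * Real.pi) / 3) ∧
      phiAL ξ ((ξ - Real.pi) / 3) ((ξ + 2 * Real.pi) / 3) =
        8 * Real.cos ((Real.pi - ξ) / 3) ^ 3) ∧
    (HasDerivAt (fun y => phiAL ξ y ((ξ - 2 * Real.pi) / 3)) 0 ((ξ + Real.pi) / 3) ∧
      HasDerivAt (fun s => phiAL ξ ((ξ + Real.pi) / 3) s) 0 ((ξ - 2 * Real.pi) / 3) ∧
      phiAL ξ ((ξ + Real.pi) / 3) ((ξ - 2 * Real.pi) / 3) =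
        8 * Real.cos ((ξ + Real.pi) / 3) ^ 3) := by
  have c3 := Real.cos_three_mul (ξ / 3)
  have c3' : Real.cos ξ = 4 * Real.cos (ξ / 3) ^ 3 - 3 * Real.cos (ξ / 3) := by
    have := Real.cos_three_mul (ξ / 3); rwa [show 3 * (ξ / 3) = ξ by ring] at this
  have cm : Real.cos (ξ - Real.pi) = 4 * Real.cos ((ξ - Real.pi) / 3) ^ 3 -
      3 * Real.cos ((ξ - Real.pi) / 3) := by
    have := Real.cos_three_mul ((ξ - Real.pi) / 3)
    rwa [show 3 * ((ξ - Real.pi) / 3) = ξ - Real.pi by ring] at this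
  have cp : Real.cos (ξ + Real.pi) = 4 * Real.cos ((ξ + Real.pi) / 3) ^ 3 -
      3 * Real.cos ((ξ + Real.pi) / 3) := by
    have := Real.cos_three_mul ((ξ + Real.pi) / 3)
    rwa [show 3 * ((ξ + Real.pi) / 3) = ξ + Real.pi by ring] at this
  refine ⟨⟨?_, ?_, ?_⟩, ⟨?_, ?_, ?_⟩, ⟨?_, ?_, ?_⟩, ⟨?_, ?_, ?_⟩⟩
  · have h := phiAL_hasDerivAt_eta ξ (-ξ) ξ
    simpa using h
  · have h := phiAL_hasDerivAt_sigma ξ ξ (-ξ)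
    simpa using h
  · simp [phiAL]
  · have h := phiAL_hasDerivAt_eta ξ (ξ / 3) (Real.pi + ξ / 3)
    have e1 : Real.sin (Real.pi + ξ / 3) = -Real.sin (ξ / 3) := by
      rw [Real.sin_add] ; simp
    have e2 : ξ - (Real.pi + ξ / 3) - ξ / 3 = ξ / 3 - Real.pi := by ring
    have e3 : Real.sin (ξ / 3 - Real.pi) = -Real.sin (ξ / 3) := by
      rw [Real.sin_sub] ; simp
    rw [e2, e1, e3] at h
    simpa using h
  · have h := phiAL_hasDerivAt_sigma ξ (Real.pi + ξ / 3) (ξ / 3)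
    have e2 : ξ - (Real.pi + ξ / 3) - ξ / 3 = ξ / 3 - Real.pi := by ring
    have e3 : Real.sin (ξ / 3 - Real.pi) = -Real.sin (ξ / 3) := by
      rw [Real.sin_sub] ; simp
    rw [e2, e3] at h
    simpa using h
  · have e2 : ξ - (Real.pi + ξ / 3) - ξ / 3 = ξ / 3 - Real.pi := by ring
    have e1 : Real.cos (Real.pi + ξ / 3) = -Real.cos (ξ / 3) := by
      rw [Real.cos_add] ; simp
    have e3 : Real.cos (ξ / 3 - Real.pi) = -Real.cos (ξ / 3) := by
      rw [Real.cos_sub] ; simp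
    rw [phiAL, e2, e1, e3, c3']
    ring
  · have h := phiAL_hasDerivAt_eta ξ ((ξ + 2 * Real.pi) / 3) ((ξ - Real.pi) / 3)
    have e2 : ξ - (ξ - Real.pi) / 3 - (ξ + 2 * Real.pi) / 3 = (ξ - Real.pi) / 3 := by ring
    rw [e2] at h
    simpa using h
  · have h := phiAL_hasDerivAt_sigma ξ ((ξ - Real.pi) / 3) ((ξ + 2 * Real.pi) / 3)
    have e2 : ξ - (ξ - Real.pi) / 3 - (ξ + 2 * Real.pi) / 3 = (ξ - Real.pi) / 3 := by ring
    have e3 : Real.sin ((ξ + 2 * Real.pi) / 3) = -Real.sin ((ξ - Real.pi) / 3) := by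
      rw [show (ξ + 2 * Real.pi) / 3 = (ξ - Real.pi) / 3 + Real.pi by ring, Real.sin_add]
      simp
    rw [e2, e3] at h
    simpa using h
  · have e2 : ξ - (ξ - Real.pi) / 3 - (ξ + 2 * Real.pi) / 3 = (ξ - Real.pi) / 3 := by ring
    have e3 : Real.cos ((ξ + 2 * Real.pi) / 3) = -Real.cos ((ξ - Real.pi) / 3) := by
      rw [show (ξ + 2 * Real.pi) / 3 = (ξ - Real.pi) / 3 + Real.pi by ring, Real.cos_add]
      simp
    have e4 : Real.cos ((Real.pi - ξ) / 3) = Real.cos ((ξ - Real.pi) / 3) := by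
      rw [show (Real.pi - ξ) / 3 = -((ξ - Real.pi) / 3) by ring, Real.cos_neg]
    have e5 : Real.cos ξ = -Real.cos (ξ - Real.pi) := by
      rw [Real.cos_sub] ; simp
    rw [phiAL, e2, e3, e4, e5, cm]
    ring
  · have h := phiAL_hasDerivAt_eta ξ ((ξ - 2 * Real.pi) / 3) ((ξ + Real.pi) / 3)
    have e2 : ξ - (ξ + Real.pi) / 3 - (ξ - 2 * Real.pi) / 3 = (ξ + Real.pi) / 3 := by ring
    rw [e2] at h
    simpa using h
  · have h := phiAL_hasDerivAt_sigma ξ ((ξ + Real.pi) / 3) ((ξ - 2 * Real.pi) / 3)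
    have e2 : ξ - (ξ + Real.pi) / 3 - (ξ - 2 * Real.pi) / 3 = (ξ + Real.pi) / 3 := by ring
    have e3 : Real.sin ((ξ - 2 * Real.pi) / 3) = -Real.sin ((ξ + Real.pi) / 3) := by
      rw [show (ξ - 2 * Real.pi) / 3 = (ξ + Real.pi) / 3 - Real.pi by ring, Real.sin_sub]
      simp
    rw [e2, e3] at h
    simpa using h
  · have e2 : ξ - (ξ + Real.pi) / 3 - (ξ - 2 * Real.pi) / 3 = (ξ + Real.pi) / 3 := by ring
    have e3 : Real.cos ((ξ - 2 * Real.pi) / 3) = -Real.cos ((ξ + Real.pi) / 3) := by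
      rw [show (ξ - 2 * Real.pi) / 3 = (ξ + Real.pi) / 3 - Real.pi by ring, Real.cos_sub]
      simp
    have e5 : Real.cos ξ = -Real.cos (ξ + Real.pi) := by
      rw [Real.cos_add] ; simp
    rw [phiAL, e2, e3, e5, cp]
    ring
end

section
/- Define φ : ℝ³ → ℝ by φ(ξ,η,σ) = −2cos ξ + 2cos η + 2cos(ξ − η − σ) − 2cos σ. Fix ξ ∈ ℝ and consider the 2×2 Hessian matrix of φ with respect to the variables (η,σ). Its determinant, i.e. (∂²φ/∂η²)(∂²φ/∂σ²) − (∂²φ/∂η∂σ)², evaluated at (η,σ) = (ξ, −ξ) equals −4cos²ξ; at (η,σ) = (π + ξ/3, ξ/3) it equals 12cos²(ξ/3); at (η,σ) = ((ξ−π)/3, (ξ+2π)/3) it equals 12cos²((ξ−π)/3); and at (η,σ) = ((ξ+π)/3, (ξ−2π)/3) it equals 12cos²((ξ+π)/3). -/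
open Real

/-- The determinant of the Hessian of `φ(ξ,·,·)` in the variables `(η,σ)`:
`(∂²φ/∂η²)(∂²φ/∂σ²) − (∂²φ/∂η∂σ)²`. -/
noncomputable def hessDetAL (ξ η σ : ℝ) : ℝ :=
  deriv (fun y => deriv (fun y' => phiAL ξ y' σ) y) η *
      deriv (fun s => deriv (fun s' => phiAL ξ η s') s) σ -
    (deriv (fun y => deriv (fun s => phiAL ξ y s) σ) η) ^ 2

lemma hasDerivAt_linarg (ξ σ y : ℝ) : HasDerivAt (fun y' : ℝ => ξ - y' - σ) (-1) y := by
  simpa using ((hasDerivAt_id y).const_sub ξ).sub_const σ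

lemma derivEta (ξ σ : ℝ) :
    deriv (fun y' => phiAL ξ y' σ) = fun y => -2 * Real.sin y + 2 * Real.sin (ξ - y - σ) := by
  funext y
  have h2 : HasDerivAt (fun y' => Real.cos (ξ - y' - σ)) (-Real.sin (ξ - y - σ) * (-1)) y :=
    (Real.hasDerivAt_cos _).comp y (hasDerivAt_linarg ξ σ y)
  have h3 : HasDerivAt (fun y' => phiAL ξ y' σ)
      (-2 * Real.sin y + 2 * Real.sin (ξ - y - σ)) y := by
    unfold phiAL
    refine HasDerivAt.congr_deriv (((((Real.hasDerivAt_cos y).const_mul 2).const_add (-2 * Real.cos ξ)).add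
      (h2.const_mul 2)).sub_const (2 * Real.cos σ)) ?_
    ring
  exact h3.deriv

lemma derivSigma (ξ η : ℝ) :
    deriv (fun s' => phiAL ξ η s') = fun s => 2 * Real.sin s + 2 * Real.sin (ξ - η - s) := by
  funext s
  have h1 : HasDerivAt (fun s' : ℝ => ξ - η - s') (-1) s := by
    simpa using (hasDerivAt_id s).const_sub (ξ - η)
  have h2 : HasDerivAt (fun s' => Real.cos (ξ - η - s')) (-Real.sin (ξ - η - s) * (-1)) s :=
    (Real.hasDerivAt_cos _).comp s h1
  have h3 : HasDerivAt (fun s' => phiAL ξ η s')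
      (2 * Real.sin s + 2 * Real.sin (ξ - η - s)) s := by
    unfold phiAL
    refine HasDerivAt.congr_deriv ((((h2.const_mul 2).const_add (-2 * Real.cos ξ + 2 * Real.cos η)).sub
      ((Real.hasDerivAt_cos s).const_mul 2))) ?_
    ring
  exact h3.deriv

lemma d2_etaeta (ξ η σ : ℝ) :
    deriv (fun y => deriv (fun y' => phiAL ξ y' σ) y) η
      = -2 * Real.cos η - 2 * Real.cos (ξ - η - σ) := by
  rw [derivEta]
  have h2 : HasDerivAt (fun y => Real.sin (ξ - y - σ)) (Real.cos (ξ - η - σ) * (-1)) η :=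
    (Real.hasDerivAt_sin _).comp η (hasDerivAt_linarg ξ σ η)
  have h3 : HasDerivAt (fun y => -2 * Real.sin y + 2 * Real.sin (ξ - y - σ))
      (-2 * Real.cos η - 2 * Real.cos (ξ - η - σ)) η := by
    refine HasDerivAt.congr_deriv (((Real.hasDerivAt_sin η).const_mul (-2)).add (h2.const_mul 2)) ?_
    ring
  exact h3.deriv

lemma d2_sigmasigma (ξ η σ : ℝ) :
    deriv (fun s => deriv (fun s' => phiAL ξ η s') s) σ
      = 2 * Real.cos σ - 2 * Real.cos (ξ - η - σ) := by
  rw [derivSigma]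
  have h1 : HasDerivAt (fun s : ℝ => ξ - η - s) (-1) σ := by
    simpa using (hasDerivAt_id σ).const_sub (ξ - η)
  have h2 : HasDerivAt (fun s => Real.sin (ξ - η - s)) (Real.cos (ξ - η - σ) * (-1)) σ :=
    (Real.hasDerivAt_sin _).comp σ h1
  have h3 : HasDerivAt (fun s => 2 * Real.sin s + 2 * Real.sin (ξ - η - s))
      (2 * Real.cos σ - 2 * Real.cos (ξ - η - σ)) σ := by
    refine HasDerivAt.congr_deriv (((Real.hasDerivAt_sin σ).const_mul 2).add (h2.const_mul 2)) ?_
    ring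
  exact h3.deriv

lemma d2_mixed (ξ η σ : ℝ) :
    deriv (fun y => deriv (fun s => phiAL ξ y s) σ) η = -2 * Real.cos (ξ - η - σ) := by
  have : (fun y => deriv (fun s => phiAL ξ y s) σ)
      = fun y => 2 * Real.sin σ + 2 * Real.sin (ξ - y - σ) := by
    funext y; rw [derivSigma]
  rw [this]
  have h2 : HasDerivAt (fun y => Real.sin (ξ - y - σ)) (Real.cos (ξ - η - σ) * (-1)) η :=
    (Real.hasDerivAt_sin _).comp η (hasDerivAt_linarg ξ σ η)
  have h3 : HasDerivAt (fun y => 2 * Real.sin σ + 2 * Real.sin (ξ - y - σ))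
      (-2 * Real.cos (ξ - η - σ)) η := by
    refine HasDerivAt.congr_deriv ((h2.const_mul 2).const_add (2 * Real.sin σ)) ?_
    ring
  exact h3.deriv

lemma hessDetAL_eq (ξ η σ : ℝ) :
    hessDetAL ξ η σ
      = -4 * Real.cos η * Real.cos σ
        + 4 * Real.cos (ξ - η - σ) * (Real.cos η - Real.cos σ) := by
  unfold hessDetAL
  rw [d2_etaeta, d2_sigmasigma, d2_mixed]
  ring

/-- Values of the Hessian determinant of the Ablowitz–Ladik phase at its
stationary points in `(η,σ)`. -/
theorem hessDetAL_at_stationary_points (ξ : ℝ) :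
    hessDetAL ξ ξ (-ξ) = -4 * Real.cos ξ ^ 2 ∧
    hessDetAL ξ (Real.pi + ξ / 3) (ξ / 3) = 12 * Real.cos (ξ / 3) ^ 2 ∧
    hessDetAL ξ ((ξ - Real.pi) / 3) ((ξ + 2 * Real.pi) / 3) =
      12 * Real.cos ((ξ - Real.pi) / 3) ^ 2 ∧
    hessDetAL ξ ((ξ + Real.pi) / 3) ((ξ - 2 * Real.pi) / 3) =
      12 * Real.cos ((ξ + Real.pi) / 3) ^ 2 := by
  refine ⟨?_, ?_, ?_, ?_⟩
  · rw [hessDetAL_eq]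
    have h : ξ - ξ - (-ξ) = ξ := by ring
    rw [h, Real.cos_neg]; ring
  · rw [hessDetAL_eq]
    have h : ξ - (Real.pi + ξ / 3) - ξ / 3 = ξ / 3 - Real.pi := by ring
    rw [h]
    simp [Real.cos_add, Real.cos_sub, Real.cos_pi, Real.sin_pi]
    ring
  · rw [hessDetAL_eq]
    have h : ξ - (ξ - Real.pi) / 3 - (ξ + 2 * Real.pi) / 3 = (ξ - Real.pi) / 3 := by ring
    have h2 : (ξ + 2 * Real.pi) / 3 = (ξ - Real.pi) / 3 + Real.pi := by ring
    rw [h, h2]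
    simp [Real.cos_add, Real.cos_pi, Real.sin_pi]
    ring
  · rw [hessDetAL_eq]
    have h : ξ - (ξ + Real.pi) / 3 - (ξ - 2 * Real.pi) / 3 = (ξ + Real.pi) / 3 := by ring
    have h2 : (ξ - 2 * Real.pi) / 3 = (ξ + Real.pi) / 3 - Real.pi := by ring
    rw [h, h2]
    simp [Real.cos_sub, Real.cos_pi, Real.sin_pi]
    ring
end

section
/- There exists a constant C > 0 such that for every continuously differentiable 2π-periodic function g : ℝ → ℂ with g(π/2) = 0 and g(−π/2) = 0, one has ∫_{−π}^{π} |g(ξ)|² / cos²ξ dξ ≤ C ∫_{−π}^{π} |g'(ξ)|² dξ. -/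
open Real MeasureTheory Filter Topology Set intervalIntegral

/-- Patched slope function: `(x-c)⁻¹ • f x` away from `c`, `deriv f c` at `c`. -/
noncomputable def hardyQ (f : ℝ → ℂ) (c : ℝ) (x : ℝ) : ℂ :=
  if x = c then deriv f c else (x - c)⁻¹ • f x

lemma hardyQ_continuous {f : ℝ → ℂ} (hf : ContDiff ℝ 1 f) {c : ℝ} (hfc : f c = 0) :
    Continuous (hardyQ f c) := by
  rw [continuous_iff_continuousAt]
  intro x
  rcases eq_or_ne x c with rfl | hx
  · have hd : HasDerivAt f (deriv f x) x := (hf.differentiable one_ne_zero x).hasDerivAt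
    have hs : Tendsto (slope f x) (𝓝[≠] x) (𝓝 (deriv f x)) :=
      hasDerivAt_iff_tendsto_slope.1 hd
    have heq : ∀ᶠ y in 𝓝[≠] x, slope f x y = hardyQ f x y := by
      filter_upwards [self_mem_nhdsWithin] with y hy
      have hy' : y ≠ x := hy
      simp [hardyQ, hy', slope, hfc]
    have h1 : Tendsto (hardyQ f x) (𝓝[≠] x) (𝓝 (hardyQ f x x)) := by
      simpa [hardyQ] using hs.congr' heq
    have h2 : Tendsto (hardyQ f x) (pure x) (𝓝 (hardyQ f x x)) :=
      tendsto_pure_nhds _ _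
    unfold ContinuousAt
    rw [← nhdsNE_sup_pure x]
    exact h1.sup h2
  · have h1 : ContinuousAt (fun y => (y - c)⁻¹ • f y) x :=
      ((continuousAt_id.sub continuousAt_const).inv₀ (sub_ne_zero.2 hx)).smul
        hf.continuous.continuousAt
    apply h1.congr
    filter_upwards [isOpen_compl_singleton.mem_nhds hx] with y hy
    have hy' : y ≠ c := hy
    rw [hardyQ, if_neg hy']

/-- Core Hardy inequality. -/
lemma hardy_core {f : ℝ → ℂ} (hf : ContDiff ℝ 1 f) {a b c : ℝ} (hab : a ≤ b)
    (hac : a ≤ c) (hcb : c ≤ b) (hfc : f c = 0) :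
    ∫ x in a..b, ‖hardyQ f c x‖ ^ 2 ≤ 4 * ∫ x in a..b, ‖deriv f x‖ ^ 2 := by
  have hdf : Differentiable ℝ f := hf.differentiable one_ne_zero
  have hf' : Continuous (deriv f) := hf.continuous_deriv le_rfl
  have hq : Continuous (hardyQ f c) := hardyQ_continuous hf hfc
  set q := hardyQ f c with hqdef
  set Ψ : ℝ → ℝ := fun x => 2 * (inner ℝ (q x) (deriv f x) : ℝ) - ‖q x‖ ^ 2 with hΨdef
  have hinner : Continuous fun x => (inner ℝ (q x) (deriv f x) : ℝ) := hq.inner hf'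
  have hΨcont : Continuous Ψ := (continuous_const.mul hinner).sub ((hq.norm).pow 2)
  set φ : ℝ → ℝ := fun x => (x - c) * ‖q x‖ ^ 2 with hφdef
  have hqx : ∀ x, x ≠ c → q x = (x - c)⁻¹ • f x := fun x hx => if_neg hx
  have hqc : q c = deriv f c := if_pos rfl
  have hqnorm : ∀ x, x ≠ c → ‖q x‖ ^ 2 = ((x - c)^2)⁻¹ * ‖f x‖ ^ 2 := by
    intro x hx
    rw [hqx x hx, norm_smul, Real.norm_eq_abs, mul_pow, abs_inv, inv_pow, sq_abs]
  have key : ∀ x, HasDerivAt φ (Ψ x) x := by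
    intro x
    rcases eq_or_ne x c with rfl | hx
    · rw [hasDerivAt_iff_tendsto_slope]
      have h1 : Tendsto (fun y => ‖q y‖ ^ 2) (𝓝[≠] x) (𝓝 (‖q x‖ ^ 2)) :=
        (((hq.norm).pow 2).tendsto x).mono_left nhdsWithin_le_nhds
      have heq : ∀ᶠ y in 𝓝[≠] x, (fun y => ‖q y‖ ^ 2) y = slope φ x y := by
        filter_upwards [self_mem_nhdsWithin] with y hy
        have hy' : y ≠ x := hy
        have : φ x = 0 := by simp [hφdef]
        rw [slope, this, vsub_eq_sub, sub_zero, hφdef]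
        simp only [smul_eq_mul]
        field_simp [sub_ne_zero.2 hy']
      have h2 : Tendsto (slope φ x) (𝓝[≠] x) (𝓝 (‖q x‖ ^ 2)) := h1.congr' (by
        filter_upwards [heq] with y hy using hy)
      have hval : Ψ x = ‖q x‖ ^ 2 := by
        rw [hΨdef]
        simp only
        rw [hqc, real_inner_self_eq_norm_sq, ← hqc]
        ring
      rw [hval]
      exact h2
    · have hFd : HasDerivAt (fun y => ‖f y‖ ^ 2) (2 * (inner ℝ (f x) (deriv f x) : ℝ)) x :=
        (hdf x).hasDerivAt.norm_sq
      have hinv : HasDerivAt (fun y => (y - c)⁻¹) (-1 / (x - c) ^ 2) x := by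
        have h := ((hasDerivAt_id' x).sub_const c).inv (sub_ne_zero.2 hx)
        exact h
      have hmul := hFd.mul hinv
      have heq : φ =ᶠ[𝓝 x] (fun y => ‖f y‖ ^ 2 * (y - c)⁻¹) := by
        filter_upwards [isOpen_compl_singleton.mem_nhds hx] with y hy
        have hy' : (y : ℝ) ≠ c := hy
        rw [hφdef]
        simp only
        rw [hqnorm y hy']
        field_simp [sub_ne_zero.2 hy']
      have hd : HasDerivAt φ
          (2 * (inner ℝ (f x) (deriv f x) : ℝ) * (x - c)⁻¹ + ‖f x‖ ^ 2 * (-1 / (x - c) ^ 2)) x :=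
        hmul.congr_of_eventuallyEq heq
      convert hd using 1
      rw [hΨdef]
      simp only
      rw [hqx x hx, real_inner_smul_left, norm_smul, Real.norm_eq_abs, mul_pow, abs_inv,
        inv_pow, sq_abs]
      field_simp [sub_ne_zero.2 hx]
      ring
  have hint : IntervalIntegrable Ψ volume a b := hΨcont.intervalIntegrable a b
  have hFTC : ∫ x in a..b, Ψ x = φ b - φ a :=
    intervalIntegral.integral_eq_sub_of_hasDerivAt (fun x _ => key x) hint
  have hφnonneg : 0 ≤ φ b - φ a := by
    have h1 : 0 ≤ (b - c) * ‖q b‖ ^ 2 := mul_nonneg (by linarith) (by positivity)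
    have h2 : (a - c) * ‖q a‖ ^ 2 ≤ 0 :=
      mul_nonpos_of_nonpos_of_nonneg (by linarith) (by positivity)
    simp only [hφdef]
    linarith
  have hiq : IntervalIntegrable (fun x => ‖q x‖ ^ 2) volume a b :=
    ((hq.norm).pow 2).intervalIntegrable a b
  have hii : IntervalIntegrable (fun x => 2 * (inner ℝ (q x) (deriv f x) : ℝ)) volume a b :=
    (continuous_const.mul hinner).intervalIntegrable a b
  have hif : IntervalIntegrable (fun x => ‖deriv f x‖ ^ 2) volume a b :=
    ((hf'.norm).pow 2).intervalIntegrable a b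
  have hsplit : ∫ x in a..b, Ψ x
      = (∫ x in a..b, 2 * (inner ℝ (q x) (deriv f x) : ℝ)) - ∫ x in a..b, ‖q x‖ ^ 2 :=
    intervalIntegral.integral_sub hii hiq
  have hptwise : ∀ x ∈ Icc a b, 2 * (inner ℝ (q x) (deriv f x) : ℝ)
      ≤ (1/2) * ‖q x‖ ^ 2 + 2 * ‖deriv f x‖ ^ 2 := by
    intro x _
    have h1 : (inner ℝ (q x) (deriv f x) : ℝ) ≤ ‖q x‖ * ‖deriv f x‖ := real_inner_le_norm _ _
    nlinarith [sq_nonneg (‖q x‖ - 2 * ‖deriv f x‖)]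
  have hmono : ∫ x in a..b, 2 * (inner ℝ (q x) (deriv f x) : ℝ)
      ≤ ∫ x in a..b, ((1/2) * ‖q x‖ ^ 2 + 2 * ‖deriv f x‖ ^ 2) :=
    intervalIntegral.integral_mono_on hab hii
      ((hiq.const_mul _).add (hif.const_mul _)) hptwise
  have hadd : ∫ x in a..b, ((1/2) * ‖q x‖ ^ 2 + 2 * ‖deriv f x‖ ^ 2)
      = (1/2) * (∫ x in a..b, ‖q x‖ ^ 2) + 2 * ∫ x in a..b, ‖deriv f x‖ ^ 2 := by
    rw [intervalIntegral.integral_add (hiq.const_mul _) (hif.const_mul _),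
      intervalIntegral.integral_const_mul, intervalIntegral.integral_const_mul]
  linarith [hFTC, hφnonneg, hsplit, hmono, hadd]

lemma sin_sq_ge {u : ℝ} (h : |u| ≤ π / 2) : (2 / π) ^ 2 * u ^ 2 ≤ Real.sin u ^ 2 := by
  have h1 : 2 / π * |u| ≤ |Real.sin u| := Real.mul_abs_le_abs_sin h
  have h2 : 0 ≤ 2 / π * |u| := by positivity
  calc (2 / π) ^ 2 * u ^ 2 = (2 / π * |u|) ^ 2 := by rw [mul_pow, sq_abs]
    _ ≤ |Real.sin u| ^ 2 := by nlinarith [abs_nonneg (Real.sin u)]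
    _ = Real.sin u ^ 2 := sq_abs _

lemma pointwise_bound {g : ℝ → ℂ} {c : ℝ} (hgc : g c = 0) {ξ : ℝ}
    (hcos : (2 / π) ^ 2 * (ξ - c) ^ 2 ≤ Real.cos ξ ^ 2) :
    ‖g ξ‖ ^ 2 / Real.cos ξ ^ 2 ≤ (π ^ 2 / 4) * ‖hardyQ g c ξ‖ ^ 2 := by
  have hπ : (0:ℝ) < π := Real.pi_pos
  rcases eq_or_ne ξ c with rfl | hx
  · have h0 : ‖g ξ‖ ^ 2 / Real.cos ξ ^ 2 = 0 := by rw [hgc]; simp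
    rw [h0]
    positivity
  · have hpos : 0 < (2 / π) ^ 2 * (ξ - c) ^ 2 := by
      have : ξ - c ≠ 0 := sub_ne_zero.2 hx
      positivity
    have hcp : 0 < Real.cos ξ ^ 2 := lt_of_lt_of_le hpos hcos
    have hqn : ‖hardyQ g c ξ‖ ^ 2 = ((ξ - c) ^ 2)⁻¹ * ‖g ξ‖ ^ 2 := by
      rw [hardyQ, if_neg hx, norm_smul, Real.norm_eq_abs, mul_pow, abs_inv, inv_pow, sq_abs]
    rw [hqn]
    have step1 : ‖g ξ‖ ^ 2 / Real.cos ξ ^ 2 ≤ ‖g ξ‖ ^ 2 / ((2 / π) ^ 2 * (ξ - c) ^ 2) := by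
      gcongr
    refine step1.trans (le_of_eq ?_)
    have hxc : ξ - c ≠ 0 := sub_ne_zero.2 hx
    field_simp
    ring

/-- Hardy-type inequality at the degenerate frequencies `±π/2`: for a `2π`-periodic
`C¹` function vanishing at `±π/2`, division by `cos ξ` is controlled in `L²(−π,π)`
by one derivative. -/
theorem hardy_inequality_degenerate_freqs :
    ∃ C : ℝ, 0 < C ∧ ∀ g : ℝ → ℂ, ContDiff ℝ 1 g →
      (∀ x : ℝ, g (x + 2 * Real.pi) = g x) →
      g (Real.pi / 2) = 0 → g (-(Real.pi / 2)) = 0 →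
      ∫ ξ in (-Real.pi)..Real.pi, ‖g ξ‖ ^ 2 / Real.cos ξ ^ 2 ≤
        C * ∫ ξ in (-Real.pi)..Real.pi, ‖deriv g ξ‖ ^ 2 := by
  have hπ : (0:ℝ) < π := Real.pi_pos
  refine ⟨π ^ 2, by positivity, ?_⟩
  intro g hg _hper hg1 hg2
  have hg' : Continuous (deriv g) := hg.continuous_deriv le_rfl
  have hqcp : Continuous (hardyQ g (π / 2)) := hardyQ_continuous hg hg1
  have hqcm : Continuous (hardyQ g (-(π / 2))) := hardyQ_continuous hg hg2
  -- pointwise bounds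
  have hboundp : ∀ ξ ∈ Icc (0:ℝ) π, ‖g ξ‖ ^ 2 / Real.cos ξ ^ 2
      ≤ (π ^ 2 / 4) * ‖hardyQ g (π / 2) ξ‖ ^ 2 := by
    intro ξ hξ
    apply pointwise_bound hg1
    have habs : |π / 2 - ξ| ≤ π / 2 := abs_le.2 ⟨by linarith [hξ.2], by linarith [hξ.1]⟩
    have := sin_sq_ge habs
    rw [Real.sin_pi_div_two_sub] at this
    calc (2 / π) ^ 2 * (ξ - π / 2) ^ 2 = (2 / π) ^ 2 * (π / 2 - ξ) ^ 2 := by ring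
      _ ≤ Real.cos ξ ^ 2 := this
  have hboundm : ∀ ξ ∈ Icc (-π) (0:ℝ), ‖g ξ‖ ^ 2 / Real.cos ξ ^ 2
      ≤ (π ^ 2 / 4) * ‖hardyQ g (-(π / 2)) ξ‖ ^ 2 := by
    intro ξ hξ
    apply pointwise_bound hg2
    have habs : |ξ + π / 2| ≤ π / 2 := abs_le.2 ⟨by linarith [hξ.1], by linarith [hξ.2]⟩
    have := sin_sq_ge habs
    rw [Real.sin_add_pi_div_two] at this
    calc (2 / π) ^ 2 * (ξ - -(π / 2)) ^ 2 = (2 / π) ^ 2 * (ξ + π / 2) ^ 2 := by ring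
      _ ≤ Real.cos ξ ^ 2 := this
  -- measurability of the LHS integrand
  have hmeas : ∀ a b : ℝ, AEStronglyMeasurable (fun ξ => ‖g ξ‖ ^ 2 / Real.cos ξ ^ 2)
      (volume.restrict (Set.uIoc a b)) :=
    fun a b => (((hg.continuous.norm.pow 2).measurable).div
      ((Real.continuous_cos.pow 2).measurable)).aestronglyMeasurable
  have hLnonneg : ∀ ξ : ℝ, 0 ≤ ‖g ξ‖ ^ 2 / Real.cos ξ ^ 2 :=
    fun ξ => div_nonneg (by positivity) (sq_nonneg _)
  -- integrability on the two halves
  have hintp : IntervalIntegrable (fun ξ => ‖g ξ‖ ^ 2 / Real.cos ξ ^ 2) volume 0 π := by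
    apply IntervalIntegrable.mono_fun'
      (g := fun ξ => (π ^ 2 / 4) * ‖hardyQ g (π / 2) ξ‖ ^ 2)
      ((continuous_const.mul ((hqcp.norm).pow 2)).intervalIntegrable _ _) (hmeas _ _)
    rw [Set.uIoc_of_le hπ.le]
    filter_upwards [ae_restrict_mem measurableSet_Ioc] with ξ hξ
    rw [Real.norm_eq_abs, abs_of_nonneg (hLnonneg ξ)]
    exact hboundp ξ (Ioc_subset_Icc_self hξ)
  have hintm : IntervalIntegrable (fun ξ => ‖g ξ‖ ^ 2 / Real.cos ξ ^ 2) volume (-π) 0 := by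
    apply IntervalIntegrable.mono_fun'
      (g := fun ξ => (π ^ 2 / 4) * ‖hardyQ g (-(π / 2)) ξ‖ ^ 2)
      ((continuous_const.mul ((hqcm.norm).pow 2)).intervalIntegrable _ _) (hmeas _ _)
    rw [Set.uIoc_of_le (by linarith : (-π:ℝ) ≤ 0)]
    filter_upwards [ae_restrict_mem measurableSet_Ioc] with ξ hξ
    rw [Real.norm_eq_abs, abs_of_nonneg (hLnonneg ξ)]
    exact hboundm ξ (Ioc_subset_Icc_self hξ)
  -- the two half estimates
  have hp : ∫ ξ in (0:ℝ)..π, ‖g ξ‖ ^ 2 / Real.cos ξ ^ 2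
      ≤ π ^ 2 * ∫ ξ in (0:ℝ)..π, ‖deriv g ξ‖ ^ 2 := by
    calc ∫ ξ in (0:ℝ)..π, ‖g ξ‖ ^ 2 / Real.cos ξ ^ 2
        ≤ ∫ ξ in (0:ℝ)..π, (π ^ 2 / 4) * ‖hardyQ g (π / 2) ξ‖ ^ 2 :=
          intervalIntegral.integral_mono_on hπ.le hintp
            ((continuous_const.mul ((hqcp.norm).pow 2)).intervalIntegrable _ _) hboundp
      _ = (π ^ 2 / 4) * ∫ ξ in (0:ℝ)..π, ‖hardyQ g (π / 2) ξ‖ ^ 2 :=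
          intervalIntegral.integral_const_mul _ _
      _ ≤ (π ^ 2 / 4) * (4 * ∫ ξ in (0:ℝ)..π, ‖deriv g ξ‖ ^ 2) := by
          apply mul_le_mul_of_nonneg_left _ (by positivity)
          exact hardy_core hg hπ.le (by linarith) (by linarith) hg1
      _ = π ^ 2 * ∫ ξ in (0:ℝ)..π, ‖deriv g ξ‖ ^ 2 := by ring
  have hm : ∫ ξ in (-π)..(0:ℝ), ‖g ξ‖ ^ 2 / Real.cos ξ ^ 2
      ≤ π ^ 2 * ∫ ξ in (-π)..(0:ℝ), ‖deriv g ξ‖ ^ 2 := by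
    calc ∫ ξ in (-π)..(0:ℝ), ‖g ξ‖ ^ 2 / Real.cos ξ ^ 2
        ≤ ∫ ξ in (-π)..(0:ℝ), (π ^ 2 / 4) * ‖hardyQ g (-(π / 2)) ξ‖ ^ 2 :=
          intervalIntegral.integral_mono_on (by linarith) hintm
            ((continuous_const.mul ((hqcm.norm).pow 2)).intervalIntegrable _ _) hboundm
      _ = (π ^ 2 / 4) * ∫ ξ in (-π)..(0:ℝ), ‖hardyQ g (-(π / 2)) ξ‖ ^ 2 :=
          intervalIntegral.integral_const_mul _ _
      _ ≤ (π ^ 2 / 4) * (4 * ∫ ξ in (-π)..(0:ℝ), ‖deriv g ξ‖ ^ 2) := by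
          apply mul_le_mul_of_nonneg_left _ (by positivity)
          exact hardy_core hg (by linarith) (by linarith) (by linarith) hg2
      _ = π ^ 2 * ∫ ξ in (-π)..(0:ℝ), ‖deriv g ξ‖ ^ 2 := by ring
  -- combine
  have hsplitL : ∫ ξ in (-π)..π, ‖g ξ‖ ^ 2 / Real.cos ξ ^ 2
      = (∫ ξ in (-π)..(0:ℝ), ‖g ξ‖ ^ 2 / Real.cos ξ ^ 2)
        + ∫ ξ in (0:ℝ)..π, ‖g ξ‖ ^ 2 / Real.cos ξ ^ 2 :=
    (intervalIntegral.integral_add_adjacent_intervals hintm hintp).symm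
  have hsplitR : ∫ ξ in (-π)..π, ‖deriv g ξ‖ ^ 2
      = (∫ ξ in (-π)..(0:ℝ), ‖deriv g ξ‖ ^ 2) + ∫ ξ in (0:ℝ)..π, ‖deriv g ξ‖ ^ 2 :=
    (intervalIntegral.integral_add_adjacent_intervals
      (((hg'.norm).pow 2).intervalIntegrable _ _)
      (((hg'.norm).pow 2).intervalIntegrable _ _)).symm
  rw [hsplitL, hsplitR, mul_add]
  exact add_le_add hm hp
end
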